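/- Let (F_η)_{η<λ} be a decreasing continuous transfinite sequence of closed sets with F₀ = X, and set f_η = χ_{F_η}. Then for every even θ ≤ λ, the alternating sum Σ*_{η<θ} (−1)^η f_η equals the characteristic function of ⋃_{η<θ, η even} (F_η \ F_{η+1}) (where F_η = ∅ for η ≥ λ). -/

import Mathlib

open Set Filter Topology

noncomputable section

/-- Oscillation of `f` at `x` restricted to `F`. -/
def osc {X : Type*} [TopologicalSpace X] (f : X → ℝ) (x : X) (F : Set X) : ENNReal :=
  ⨅ (U : Set X) (_ : IsOpen U) (_ : x ∈ U),
    ⨆ (y) (_ : y ∈ U ∩ F) (z) (_ : z ∈ U ∩ F), ENNReal.ofReal |f y - f z|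

/-- Oscillation derivative. -/
def oscDeriv {X : Type*} [TopologicalSpace X] (f : X → ℝ) (ε : ℝ) (F : Set X) : Set X :=
  {x ∈ F | ENNReal.ofReal ε ≤ osc f x F}

/-- Iterated derivatives of a set operation. -/
def iterD {X : Type*} (D : Set X → Set X) (F : Set X) (o : Ordinal.{0}) : Set X :=
  Ordinal.limitRecOn o F (fun _ ih => D ih) (fun o _ ih => ⋂ (η : Ordinal.{0}) (h : η < o), ih η h)

open Classical in
/-- Rank of a derivative: least `θ` with `D^θ(X) = ∅`, or `ω₁` if there is none. -/
def rkD {X : Type*} (D : Set X → Set X) : Ordinal.{0} :=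
  if ∃ θ, iterD D Set.univ θ = ∅ then sInf {θ | iterD D Set.univ θ = ∅}
  else (Cardinal.aleph 1).ord

/-- Oscillation rank. -/
def betaRank {X : Type*} [TopologicalSpace X] (f : X → ℝ) : Ordinal.{0} :=
  ⨆ ε : {ε : ℝ // 0 < ε}, rkD (oscDeriv f ε.1)

/-- Oscillation of a sequence of functions. -/
def oscSeq {X : Type*} [TopologicalSpace X] (f : ℕ → X → ℝ) (x : X) (F : Set X) : ENNReal :=
  ⨅ (U : Set X) (_ : IsOpen U) (_ : x ∈ U) (N : ℕ),
    ⨆ (m) (_ : N ≤ m) (n) (_ : N ≤ n) (y) (_ : y ∈ U ∩ F), ENNReal.ofReal |f m y - f n y|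

def oscSeqDeriv {X : Type*} [TopologicalSpace X] (f : ℕ → X → ℝ) (ε : ℝ) (F : Set X) : Set X :=
  {x ∈ F | ENNReal.ofReal ε ≤ oscSeq f x F}

/-- Convergence rank of a sequence. -/
def gammaRank {X : Type*} [TopologicalSpace X] (f : ℕ → X → ℝ) : Ordinal.{0} :=
  ⨆ ε : {ε : ℝ // 0 < ε}, rkD (oscSeqDeriv f ε.1)

/-- Alternating transfinite sum `Σ*_{η<θ} (−1)^η f_η`. -/
def altSum {X : Type*} (f : Ordinal.{0} → X → ℝ) (θ : Ordinal.{0}) : X → ℝ :=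
  Ordinal.limitRecOn θ (fun _ => 0)
    (fun η ih x => ih x + (if η % 2 = 0 then f η x else - f η x))
    (fun θ _ ih x => sSup {y | ∃ ζ, ∃ h : ζ < θ, ζ % 2 = 0 ∧ ih ζ h x = y})

lemma altSum_zero {X : Type*} (f : Ordinal.{0} → X → ℝ) : altSum f 0 = fun _ => 0 :=
  Ordinal.limitRecOn_zero _ _ _

lemma altSum_succ {X : Type*} (f : Ordinal.{0} → X → ℝ) (θ : Ordinal.{0}) :
    altSum f (θ + 1) = fun x => altSum f θ x + (if θ % 2 = 0 then f θ x else - f θ x) := by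
  rw [altSum, Ordinal.add_one_eq_succ, Ordinal.limitRecOn_succ]; rfl

lemma altSum_limit {X : Type*} (f : Ordinal.{0} → X → ℝ) (θ : Ordinal.{0}) (h : Order.IsSuccLimit θ) :
    altSum f θ = fun x => sSup {y | ∃ ζ, ∃ _ : ζ < θ, ζ % 2 = 0 ∧ altSum f ζ x = y} := by
  rw [altSum, Ordinal.limitRecOn_limit _ _ _ _ h]; rfl

lemma lt_two_cases (r : Ordinal.{0}) (hr : r < 2) : r = 0 ∨ r = 1 := by
  rw [show (2 : Ordinal) = Order.succ 1 by rw [← Ordinal.add_one_eq_succ]; norm_num] at hr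
  rcases lt_or_eq_of_le (Order.lt_succ_iff.mp hr) with h2 | h2
  · exact Or.inl (Ordinal.lt_one_iff_zero.mp h2)
  · exact Or.inr h2

lemma mod2_cases (η : Ordinal.{0}) : η % 2 = 0 ∨ η % 2 = 1 :=
  lt_two_cases _ (Ordinal.mod_lt η two_ne_zero)

lemma mod2_succ (η : Ordinal.{0}) : (η + 1) % 2 = if η % 2 = 0 then 1 else 0 := by
  have hd := Ordinal.div_add_mod η 2
  rcases mod2_cases η with h | h
  · rw [if_pos h]
    rw [h, add_zero] at hd
    have e : η + 1 = 2 * (η / 2) + 1 := by rw [hd]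
    rw [e, Ordinal.mul_add_mod_self]
    exact Ordinal.mod_eq_of_lt one_lt_two
  · rw [if_neg (by rw [h]; exact one_ne_zero)]
    have e : η + 1 = 2 * (η / 2 + 1) := by
      rw [mul_add, mul_one]
      conv_lhs => rw [← hd]
      rw [add_assoc, h]
      norm_num
    rw [e, Ordinal.mul_mod]

lemma mod2_limit {θ : Ordinal.{0}} (h : Order.IsSuccLimit θ) : θ % 2 = 0 := by
  rcases mod2_cases θ with h0 | h1
  · exact h0
  · exfalso
    have hd := Ordinal.div_add_mod θ 2
    rw [h1] at hd
    have h2 : 2 * (θ / 2) < θ := by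
      conv_rhs => rw [← hd]
      rw [Ordinal.add_one_eq_succ]; exact Order.lt_succ _
    have h3 := h.succ_lt h2
    rw [Ordinal.add_one_eq_succ] at hd
    rw [hd] at h3
    exact lt_irrefl _ h3

def SS {X : Type*} (Fe : Ordinal.{0} → Set X) (t : Ordinal.{0}) : Set X :=
  ⋃ (η : Ordinal.{0}) (_ : η < t) (_ : η % 2 = 0), Fe η \ Fe (η + 1)

lemma mem_SS {X : Type*} {Fe : Ordinal.{0} → Set X} {t : Ordinal.{0}} {x : X} :
    x ∈ SS Fe t ↔ ∃ η, η < t ∧ η % 2 = 0 ∧ x ∈ Fe η ∧ x ∉ Fe (η + 1) := by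
  simp only [SS, Set.mem_iUnion, Set.mem_diff]
  exact ⟨fun ⟨a, b, c, d⟩ => ⟨a, b, c, d.1, d.2⟩, fun ⟨a, b, c, d, e⟩ => ⟨a, b, c, ⟨d, e⟩⟩⟩

lemma lt_add_one' (ν : Ordinal.{0}) : ν < ν + 1 := by
  rw [Ordinal.add_one_eq_succ]; exact Order.lt_succ ν

lemma altSum_eq {X : Type*} (Fe : Ordinal.{0} → Set X)
    (hmono : ∀ η ζ : Ordinal.{0}, η ≤ ζ → Fe ζ ⊆ Fe η) (x : X) (θ : Ordinal.{0}) :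
    (θ % 2 = 0 →
      altSum (fun η => (Fe η).indicator fun _ => (1 : ℝ)) θ x =
        (SS Fe θ).indicator (fun _ => (1 : ℝ)) x) ∧
    (∀ μ : Ordinal.{0}, θ = μ + 1 → μ % 2 = 0 →
      altSum (fun η => (Fe η).indicator fun _ => (1 : ℝ)) θ x =
        (SS Fe μ ∪ Fe μ).indicator (fun _ => (1 : ℝ)) x) := by
  induction θ using Ordinal.induction with
  | h θ IH =>
  have hdisj : ∀ μ : Ordinal.{0}, x ∈ Fe μ → x ∉ SS Fe μ := by
    intro μ hx hmem
    rcases mem_SS.mp hmem with ⟨η, hη, _, _, hd⟩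
    exact hd (hmono (η + 1) μ (by rw [Ordinal.add_one_eq_succ]; exact Order.succ_le_of_lt hη) hx)
  rcases Ordinal.zero_or_succ_or_isSuccLimit θ with rfl | ⟨μ, hθeq⟩ | hlim
  · constructor
    · intro _
      rw [altSum_zero]
      have : SS Fe 0 = ∅ := by
        ext y; simp [SS, fun a : Ordinal.{0} => not_lt_of_ge (zero_le (a := a))]
      simp [this]
    · intro μ hμ _
      exact absurd hμ (by rw [Ordinal.add_one_eq_succ]; exact (Ordinal.succ_ne_zero μ).symm)
  · rw [← Ordinal.add_one_eq_succ] at hθeq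
    subst hθeq
    have hA := congrFun (altSum_succ (fun η => (Fe η).indicator fun _ => (1 : ℝ)) μ) x
    have hμlt : μ < μ + 1 := lt_add_one' μ
    constructor
    · -- θ = μ + 1 even: μ odd
      intro hθe
      have hμodd : μ % 2 = 1 := by
        rcases mod2_cases μ with h | h
        · rw [mod2_succ, if_pos h] at hθe; exact absurd hθe one_ne_zero
        · exact h
      rcases Ordinal.zero_or_succ_or_isSuccLimit μ with rfl | ⟨ν, hν⟩ | h
      · simp [Ordinal.zero_mod] at hμodd
      · rw [← Ordinal.add_one_eq_succ] at hν
        subst hν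
        have hνe : ν % 2 = 0 := by
          rcases mod2_cases ν with h | h
          · exact h
          · rw [mod2_succ, if_neg (by rw [h]; exact one_ne_zero)] at hμodd
            exact absurd hμodd.symm one_ne_zero
        have hIH := (IH (ν + 1) hμlt).2 ν rfl hνe
        rw [hA, hIH, if_neg (by rw [hμodd]; exact one_ne_zero)]
        have hsub : Fe (ν + 1) ⊆ Fe ν := hmono ν (ν + 1) (le_of_lt (lt_add_one' ν))
        have hνlt2 : ν < ν + 1 + 1 := lt_trans (lt_add_one' ν) (lt_add_one' (ν + 1))
        have hiff : x ∈ SS Fe (ν + 1 + 1) ↔ (x ∈ SS Fe ν ∨ (x ∈ Fe ν ∧ x ∉ Fe (ν + 1))) := by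
          constructor
          · intro hmem
            rcases mem_SS.mp hmem with ⟨η, hη1, hη2, hη3, hη4⟩
            have hηle : η ≤ ν + 1 := by
              rw [Ordinal.add_one_eq_succ] at hη1 ⊢
              exact Order.lt_succ_iff.mp hη1
            have hηne : η ≠ ν + 1 := by
              intro h; rw [h, mod2_succ, if_pos hνe] at hη2; exact absurd hη2 one_ne_zero
            have hηle2 : η ≤ ν := by
              rcases lt_or_eq_of_le hηle with h | h
              · rw [Ordinal.add_one_eq_succ] at h; exact Order.lt_succ_iff.mp h
              · exact absurd h hηne
            rcases lt_or_eq_of_le hηle2 with h | h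
            · exact Or.inl (mem_SS.mpr ⟨η, h, hη2, hη3, hη4⟩)
            · subst h; exact Or.inr ⟨hη3, hη4⟩
          · rintro (hmem | ⟨h1, h2⟩)
            · rcases mem_SS.mp hmem with ⟨η, hη1, hη2, hη3, hη4⟩
              exact mem_SS.mpr ⟨η, lt_trans hη1 hνlt2, hη2, hη3, hη4⟩
            · exact mem_SS.mpr ⟨ν, hνlt2, hνe, h1, h2⟩
        by_cases h1 : x ∈ Fe (ν + 1)
        · have h2 : x ∈ Fe ν := hsub h1
          have h3 : x ∉ SS Fe ν := hdisj ν h2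
          have h4 : x ∉ SS Fe (ν + 1 + 1) := by
            rw [hiff]; push_neg; exact ⟨h3, fun _ => h1⟩
          simp [Set.indicator_apply, h1, h2, h3, h4, -Ordinal.add_one_eq_succ]
        · by_cases h2 : x ∈ Fe ν
          · have h3 : x ∉ SS Fe ν := hdisj ν h2
            have h4 : x ∈ SS Fe (ν + 1 + 1) := hiff.mpr (Or.inr ⟨h2, h1⟩)
            simp [Set.indicator_apply, h1, h2, h3, h4, -Ordinal.add_one_eq_succ]
          · by_cases h3 : x ∈ SS Fe ν
            · have h5 : x ∈ SS Fe (ν + 1 + 1) := hiff.mpr (Or.inl h3)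
              simp [Set.indicator_apply, h1, h2, h3, h5, -Ordinal.add_one_eq_succ]
            · have h5 : x ∉ SS Fe (ν + 1 + 1) := by
                intro hh
                rcases hiff.mp hh with a | ⟨a, _⟩
                · exact h3 a
                · exact h2 a
              simp [Set.indicator_apply, h1, h2, h3, h5, -Ordinal.add_one_eq_succ]
      · rw [mod2_limit h] at hμodd; exact absurd hμodd.symm one_ne_zero
    · -- second conjunct at successor
      intro ν hν hνe
      have hνμ : ν = μ := by
        rw [Ordinal.add_one_eq_succ, Ordinal.add_one_eq_succ] at hν
        exact (Order.succ_injective hν).symm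
      subst hνμ
      have hIH := (IH ν hμlt).1 hνe
      rw [hA, hIH, if_pos hνe]
      by_cases h1 : x ∈ Fe ν
      · have h2 : x ∉ SS Fe ν := hdisj ν h1
        simp [Set.indicator_apply, h1, h2]
      · by_cases h2 : x ∈ SS Fe ν <;> simp [Set.indicator_apply, h1, h2]
  · -- limit case
    constructor
    · intro _
      have hA := congrFun (altSum_limit (fun η => (Fe η).indicator fun _ => (1 : ℝ)) θ hlim) x
      rw [hA]
      set T : Set ℝ := {y | ∃ ζ, ∃ _ : ζ < θ, ζ % 2 = 0 ∧
        altSum (fun η => (Fe η).indicator fun _ => (1 : ℝ)) ζ x = y} with hT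
      have hval : ∀ y ∈ T, ∃ ζ, ζ < θ ∧ y = (SS Fe ζ).indicator (fun _ => (1 : ℝ)) x := by
        rintro y ⟨ζ, hζ, hζe, hy⟩
        exact ⟨ζ, hζ, by rw [← hy, (IH ζ hζ).1 hζe]⟩
      have hub : ∀ y ∈ T, y ≤ 1 := by
        intro y hy
        rcases hval y hy with ⟨ζ, _, rfl⟩
        by_cases h : x ∈ SS Fe ζ <;> simp [Set.indicator_apply, h]
      have hne : T.Nonempty := ⟨altSum (fun η => (Fe η).indicator fun _ => (1 : ℝ)) 0 x,
        0, hlim.pos, Ordinal.zero_mod 2, rfl⟩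
      by_cases hx : x ∈ SS Fe θ
      · rcases mem_SS.mp hx with ⟨η, hη1, hη2, hη3, hη4⟩
        have hη2lt : η + 1 + 1 < θ := by
          rw [Ordinal.add_one_eq_succ, Ordinal.add_one_eq_succ]
          exact hlim.succ_lt (hlim.succ_lt hη1)
        have hη2ev : (η + 1 + 1) % 2 = 0 := by
          rw [mod2_succ, mod2_succ, if_pos hη2]
          simp
        have hmem1 : x ∈ SS Fe (η + 1 + 1) :=
          mem_SS.mpr ⟨η, lt_trans (lt_add_one' η) (lt_add_one' (η + 1)), hη2, hη3, hη4⟩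
        have h1T : (1 : ℝ) ∈ T := by
          refine ⟨η + 1 + 1, hη2lt, hη2ev, ?_⟩
          rw [(IH _ hη2lt).1 hη2ev]
          simp [Set.indicator_apply, hmem1, -Ordinal.add_one_eq_succ]
        have : sSup T = 1 := le_antisymm (csSup_le hne hub) (le_csSup ⟨1, hub⟩ h1T)
        rw [this]
        simp [Set.indicator_apply, hx]
      · have hzero : ∀ y ∈ T, y = 0 := by
          intro y hy
          rcases hval y hy with ⟨ζ, hζ, rfl⟩
          have : x ∉ SS Fe ζ := by
            intro hmem
            rcases mem_SS.mp hmem with ⟨η, hη1, hη2, hη3, hη4⟩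
            exact hx (mem_SS.mpr ⟨η, lt_trans hη1 hζ, hη2, hη3, hη4⟩)
          simp [Set.indicator_apply, this]
        have hTeq : T = {0} := by
          apply Set.eq_singleton_iff_nonempty_unique_mem.mpr
          exact ⟨hne, hzero⟩
        rw [hTeq, csSup_singleton]
        simp [Set.indicator_apply, hx]
    · intro μ hμ _
      exfalso
      have h1 : μ < θ := by rw [hμ]; exact lt_add_one' μ
      have h2 := hlim.succ_lt h1
      rw [← Ordinal.add_one_eq_succ, ← hμ] at h2
      exact lt_irrefl _ h2

/-- The `ξ`-th additive Borel class. -/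
def Sigma0 {X : Type*} [TopologicalSpace X] (ξ : Ordinal.{0}) : Set (Set X) :=
  {s | IsOpen s} ∪
  {s | ∃ g : ℕ → Set X,
        (∀ n, ∃ η, ∃ _ : η < ξ, 1 ≤ η ∧ (g n)ᶜ ∈ Sigma0 η) ∧ s = ⋃ n, g n}
termination_by ξ

/-- Baire class `ξ` functions. -/
def BaireClass {X : Type*} [TopologicalSpace X] (ξ : Ordinal.{0}) (f : X → ℝ) : Prop :=
  (ξ = 0 ∧ Continuous f) ∨
  (1 ≤ ξ ∧ ∃ g : ℕ → X → ℝ,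
      (∀ n, ∃ η, ∃ _ : η < ξ, BaireClass η (g n)) ∧
      ∀ x, Tendsto (fun n => g n x) atTop (𝓝 (f x)))
termination_by ξ


theorem stmt11 {X : Type*} [TopologicalSpace X]
    (lam : Ordinal.{0}) (F : Ordinal.{0} → Set X)
    (hcl : ∀ η : Ordinal.{0}, η < lam → IsClosed (F η))
    (hdec : ∀ η ζ : Ordinal.{0}, η ≤ ζ → ζ < lam → F ζ ⊆ F η)
    (hcont : ∀ θ : Ordinal.{0}, θ < lam → Order.IsSuccLimit θ →
      F θ = ⋂ (η : Ordinal.{0}) (_ : η < θ), F η)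
    (hF0 : F 0 = Set.univ)
    (Fe : Ordinal.{0} → Set X)
    (hFe : Fe = fun η => if η < lam then F η else ∅)
    (θ : Ordinal.{0}) (hθ : θ ≤ lam) (hθe : θ % 2 = 0) (x : X) :
    altSum (fun η => (Fe η).indicator fun _ => (1 : ℝ)) θ x =
      Set.indicator (⋃ (η : Ordinal.{0}) (_ : η < θ) (_ : η % 2 = 0),
        Fe η \ Fe (η + 1)) (fun _ => (1 : ℝ)) x := by
  have hmono : ∀ η ζ : Ordinal.{0}, η ≤ ζ → Fe ζ ⊆ Fe η := by
    intro η ζ hle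
    rw [hFe]
    simp only
    by_cases hζ : ζ < lam
    · rw [if_pos hζ, if_pos (lt_of_le_of_lt hle hζ)]
      exact hdec η ζ hle hζ
    · rw [if_neg hζ]
      exact Set.empty_subset _
  rw [(altSum_eq Fe hmono x θ).1 hθe]
  rfl

end
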